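/- Let x be a bounded operator on a Hilbert space with x + x* ≥ 0, and set y = x(I + x)⁻¹ (the inverse exists). Then ‖I - 2y‖ ≤ 1. -/

import Mathlib

open ContinuousLinearMap
open scoped InnerProductSpace

/-- If `x ∈ B(H)` has `x + x* ≥ 0`, then `I + x` is invertible, and with
`y = x (I + x)⁻¹` (the Cayley transform trick) one has `‖I - 2y‖ ≤ 1`. -/
theorem stmt3 {H : Type*} [NormedAddCommGroup H] [InnerProductSpace ℂ H]
    [CompleteSpace H] (x : H →L[ℂ] H) (hx : (x + adjoint x).IsPositive) :
    IsUnit (1 + x) ∧ ‖1 - (2 : ℂ) • (x * Ring.inverse (1 + x))‖ ≤ 1 := by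
  have hre : ∀ k : H, 0 ≤ RCLike.re ⟪x k, k⟫_ℂ := by
    intro k
    have h2 := hx.2 k
    rw [reApplyInnerSelf_apply, add_apply, inner_add_left, map_add,
      adjoint_inner_left, inner_re_symm k (x k)] at h2
    linarith
  have hre' : ∀ k : H, 0 ≤ RCLike.re ⟪k, x k⟫_ℂ := fun k => by
    rw [inner_re_symm]; exact hre k
  -- lower bound for (1 + x)
  have hlow : ∀ k : H, ‖k‖ ≤ ‖(1 + x) k‖ := by
    intro k
    have hsq : ‖(1 + x) k‖ ^ 2 = ‖k‖ ^ 2 + 2 * RCLike.re ⟪k, x k⟫_ℂ + ‖x k‖ ^ 2 := by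
      rw [add_apply, one_apply_eq_self]
      exact norm_add_sq (𝕜 := ℂ) k (x k)
    nlinarith [hre' k, norm_nonneg (x k), norm_nonneg k, norm_nonneg ((1 + x) k)]
  -- antilipschitz, closed range, injective
  have hanti : AntilipschitzWith 1 ((1 + x : H →L[ℂ] H) : H → H) :=
    ContinuousLinearMap.antilipschitz_of_bound (1 + x) (fun k => by simpa using hlow k)
  have hker : LinearMap.ker ((1 + x : H →L[ℂ] H) : H →ₗ[ℂ] H) = ⊥ :=
    (LinearMap.ker_eq_bot (f := ((1 + x : H →L[ℂ] H) : H →ₗ[ℂ] H))).mpr hanti.injective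
  have hclosed : IsClosed (Set.range ((1 + x : H →L[ℂ] H) : H → H)) :=
    hanti.isClosed_range (1 + x).uniformContinuous
  have : CompleteSpace (LinearMap.range ((1 + x : H →L[ℂ] H) : H →ₗ[ℂ] H) : Submodule ℂ H) :=
    hclosed.completeSpace_coe
  have hrange : LinearMap.range ((1 + x : H →L[ℂ] H) : H →ₗ[ℂ] H) = ⊤ := by
    rw [← Submodule.orthogonal_eq_bot_iff]
    rw [Submodule.eq_bot_iff]
    intro v hv
    have h0 : ⟪(1 + x) v, v⟫_ℂ = 0 := hv _ (LinearMap.mem_range_self _ v)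
    have h1 : RCLike.re ⟪(1 + x) v, v⟫_ℂ = ‖v‖ ^ 2 + RCLike.re ⟪x v, v⟫_ℂ := by
      rw [add_apply, one_apply_eq_self, inner_add_left, map_add, inner_self_eq_norm_sq]
    rw [h0, map_zero] at h1
    have := hre v
    have hv0 : ‖v‖ ^ 2 ≤ 0 := by linarith
    have : ‖v‖ = 0 := by nlinarith [norm_nonneg v]
    simpa using this
  have hu : IsUnit (1 + x) := by
    let e := ContinuousLinearEquiv.ofBijective (1 + x) hker hrange
    refine ⟨⟨1 + x, (e.symm : H →L[ℂ] H), ?_, ?_⟩, rfl⟩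
    · ext h
      show (1 + x) (e.symm h) = h
      exact ContinuousLinearEquiv.ofBijective_apply_symm_apply _ hker hrange h
    · ext h
      show e.symm ((1 + x) h) = h
      exact ContinuousLinearEquiv.ofBijective_symm_apply_apply _ hker hrange h
  refine ⟨hu, ?_⟩
  refine opNorm_le_bound _ zero_le_one (fun h => ?_)
  set k : H := Ring.inverse (1 + x) h with hk
  have hhk : (1 + x) k = h := by
    have := Ring.mul_inverse_cancel _ hu
    calc (1 + x) k = ((1 + x) * Ring.inverse (1 + x)) h := rfl
    _ = h := by rw [this]; rfl
  have happ : (1 - (2 : ℂ) • (x * Ring.inverse (1 + x))) h = (1 - x) k := by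
    have : (1 - (2 : ℂ) • (x * Ring.inverse (1 + x))) h = h - (2 : ℂ) • x k := by
      simp [sub_apply, smul_apply, mul_apply, hk]
    rw [this, ← hhk]
    simp [add_apply, sub_apply, one_apply, two_smul]
  rw [happ, one_mul, ← hhk]
  -- ‖(1 - x) k‖ ≤ ‖(1 + x) k‖
  have hsub : ‖(1 - x) k‖ ^ 2 = ‖k‖ ^ 2 - 2 * RCLike.re ⟪k, x k⟫_ℂ + ‖x k‖ ^ 2 := by
    rw [sub_apply, one_apply_eq_self]
    exact norm_sub_sq (𝕜 := ℂ) k (x k)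
  have hadd : ‖(1 + x) k‖ ^ 2 = ‖k‖ ^ 2 + 2 * RCLike.re ⟪k, x k⟫_ℂ + ‖x k‖ ^ 2 := by
    rw [add_apply, one_apply_eq_self]
    exact norm_add_sq (𝕜 := ℂ) k (x k)
  nlinarith [hre' k, norm_nonneg ((1 - x) k), norm_nonneg ((1 + x) k)]
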